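/- Let φ : ℝ → ℝ be continuous and integrable with φ(y) ≥ 0 for all y (or φ(y) ≤ 0 for all y), and define g(y) = (1/2) ∫_{-∞}^{∞} e^{-|y-y'|} φ(y') dy'. Then |g'(y)| ≤ |g(y)| for all y ∈ ℝ. -/

import Mathlib

open MeasureTheory Real Set

private lemma my_integral_Ioi_sub_Ioi {h : ℝ → ℝ} {a b : ℝ}
    (ha : IntegrableOn h (Ioi a)) (hb : IntegrableOn h (Ioi b)) :
    (∫ x in Ioi a, h x) - ∫ x in Ioi b, h x = ∫ x in a..b, h x := by
  wlog hab : a ≤ b generalizing a b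
  · rw [intervalIntegral.integral_symm, ← this hb ha (le_of_not_ge hab), neg_sub]
  rw [sub_eq_iff_eq_add, intervalIntegral.integral_of_le hab,
    ← setIntegral_union (Ioc_disjoint_Ioi le_rfl) measurableSet_Ioi
      (ha.mono_set Ioc_subset_Ioi_self) hb, Ioc_union_Ioi_eq_Ioi hab]

private lemma aux_pos (φ : ℝ → ℝ) (hcont : Continuous φ) (hint : Integrable φ)
    (hpos : ∀ y, 0 ≤ φ y) (g : ℝ → ℝ)
    (hg : ∀ y, g y = (1/2) * ∫ y' : ℝ, Real.exp (-|y - y'|) * φ y') :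
    ∀ y, |deriv g y| ≤ |g y| := by
  set f : ℝ → ℝ := fun t => Real.exp t * φ t with hf_def
  set h : ℝ → ℝ := fun t => Real.exp (-t) * φ t with hh_def
  have hfc : Continuous f := Real.continuous_exp.mul hcont
  have hhc : Continuous h := (Real.continuous_exp.comp continuous_neg).mul hcont
  have hfint : ∀ b : ℝ, IntegrableOn f (Iic b) := by
    intro b
    refine Integrable.mono' ((hint.abs.const_mul (Real.exp b)).integrableOn)
      hfc.aestronglyMeasurable.restrict ?_
    refine (ae_restrict_iff' measurableSet_Iic).2 (ae_of_all _ fun x hx => ?_)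
    have : Real.exp x ≤ Real.exp b := Real.exp_le_exp.2 hx
    simp only [hf_def, Real.norm_eq_abs, abs_mul, abs_of_pos (Real.exp_pos x)]
    exact mul_le_mul_of_nonneg_right this (abs_nonneg _)
  have hhint : ∀ b : ℝ, IntegrableOn h (Ioi b) := by
    intro b
    refine Integrable.mono' ((hint.abs.const_mul (Real.exp (-b))).integrableOn)
      hhc.aestronglyMeasurable.restrict ?_
    refine (ae_restrict_iff' measurableSet_Ioi).2 (ae_of_all _ fun x hx => ?_)
    have : Real.exp (-x) ≤ Real.exp (-b) := Real.exp_le_exp.2 (by linarith [le_of_lt (mem_Ioi.mp hx)])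
    simp only [hh_def, Real.norm_eq_abs, abs_mul, abs_of_pos (Real.exp_pos (-x))]
    exact mul_le_mul_of_nonneg_right this (abs_nonneg _)
  set A : ℝ → ℝ := fun u => ∫ t in Iic u, f t with hA_def
  set B : ℝ → ℝ := fun u => ∫ t in Ioi u, h t with hB_def
  have hgAB : ∀ u, g u = (1/2) * (Real.exp (-u) * A u + Real.exp u * B u) := by
    intro u
    have hk : Integrable (fun y' => Real.exp (-|u - y'|) * φ y') := by
      refine Integrable.mono' hint.abs
        ((Real.continuous_exp.comp (continuous_const.sub continuous_id).abs.neg).mul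
          hcont).aestronglyMeasurable (ae_of_all _ fun x => ?_)
      have h1 : Real.exp (-|u - x|) ≤ 1 := Real.exp_le_one_iff.2 (neg_nonpos.2 (abs_nonneg _))
      simp only [Real.norm_eq_abs, abs_mul, abs_of_pos (Real.exp_pos _)]
      calc Real.exp (-|u - x|) * |φ x| ≤ 1 * |φ x| :=
            mul_le_mul_of_nonneg_right h1 (abs_nonneg _)
        _ = |φ x| := one_mul _
    have hsplit : (∫ y' in Iic u, Real.exp (-|u - y'|) * φ y')
        + (∫ y' in Ioi u, Real.exp (-|u - y'|) * φ y')
        = ∫ y' : ℝ, Real.exp (-|u - y'|) * φ y' :=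
      intervalIntegral.integral_Iic_add_Ioi hk.integrableOn hk.integrableOn
    have h1 : (∫ y' in Iic u, Real.exp (-|u - y'|) * φ y') = Real.exp (-u) * A u := by
      rw [hA_def, ← integral_const_mul]
      refine setIntegral_congr_fun measurableSet_Iic fun x hx => ?_
      have : |u - x| = u - x := abs_of_nonneg (by simpa using hx)
      rw [this, hf_def, ← mul_assoc, ← Real.exp_add]
      ring_nf
    have h2 : (∫ y' in Ioi u, Real.exp (-|u - y'|) * φ y') = Real.exp u * B u := by
      rw [hB_def, ← integral_const_mul]
      refine setIntegral_congr_fun measurableSet_Ioi fun x hx => ?_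
      have hx' : u < x := hx
      have : |u - x| = -(u - x) := abs_of_nonpos (by linarith)
      rw [this, hh_def, ← mul_assoc, ← Real.exp_add]
      ring_nf
    rw [hg u, ← hsplit, h1, h2]
  intro y
  have hA : HasDerivAt A (f y) y := by
    have heq : A = fun u => A 0 + ∫ t in (0:ℝ)..u, f t := by
      funext u
      have := intervalIntegral.integral_Iic_sub_Iic (hfint 0) (hfint u)
      simp only [hA_def]
      linarith [this]
    rw [heq]
    exact (intervalIntegral.integral_hasDerivAt_right (hfc.intervalIntegrable 0 y)
      hfc.stronglyMeasurable.stronglyMeasurableAtFilter hfc.continuousAt).const_add _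
  have hB : HasDerivAt B (-(h y)) y := by
    have heq : B = fun u => B 0 - ∫ t in (0:ℝ)..u, h t := by
      funext u
      have := my_integral_Ioi_sub_Ioi (hhint 0) (hhint u)
      simp only [hB_def]
      linarith [this]
    rw [heq]
    exact HasDerivAt.const_sub _ (intervalIntegral.integral_hasDerivAt_right
      (hhc.intervalIntegrable 0 y)
      hhc.stronglyMeasurable.stronglyMeasurableAtFilter hhc.continuousAt)
  have h1 : HasDerivAt (fun u : ℝ => Real.exp (-u)) (-Real.exp (-y)) y := by
    simpa using (hasDerivAt_neg y).exp
  have hP := h1.mul hA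
  have hQ := (Real.hasDerivAt_exp y).mul hB
  have hgd : HasDerivAt g ((1/2) * (Real.exp y * B y - Real.exp (-y) * A y)) y := by
    have heq : g = fun u => (1/2) * (Real.exp (-u) * A u + Real.exp u * B u) := funext hgAB
    rw [heq]
    have hD := (hP.add hQ).const_mul (1/2 : ℝ)
    convert hD using 1
    · rfl
    · rfl
    · rfl
    simp only [hf_def, hh_def]
    rw [Real.exp_neg]
    field_simp
    ring
  rw [hgd.deriv]
  have hA0 : 0 ≤ A y :=
    setIntegral_nonneg measurableSet_Iic fun x _ => mul_nonneg (Real.exp_pos x).le (hpos x)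
  have hB0 : 0 ≤ B y :=
    setIntegral_nonneg measurableSet_Ioi fun x _ => mul_nonneg (Real.exp_pos _).le (hpos x)
  have ha : 0 ≤ Real.exp (-y) * A y := mul_nonneg (Real.exp_pos _).le hA0
  have hb : 0 ≤ Real.exp y * B y := mul_nonneg (Real.exp_pos _).le hB0
  rw [hgAB y, abs_mul, abs_mul]
  refine mul_le_mul_of_nonneg_left ?_ (abs_nonneg _)
  rw [abs_of_nonneg (by linarith : (0:ℝ) ≤ Real.exp (-y) * A y + Real.exp y * B y)]
  exact abs_le.2 ⟨by linarith, by linarith⟩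

theorem stmt_4 (φ : ℝ → ℝ) (hcont : Continuous φ) (hint : Integrable φ)
    (hsign : (∀ y, 0 ≤ φ y) ∨ (∀ y, φ y ≤ 0))
    (g : ℝ → ℝ)
    (hg : ∀ y, g y = (1/2) * ∫ y' : ℝ, Real.exp (-|y - y'|) * φ y') :
    ∀ y, |deriv g y| ≤ |g y| := by
  rcases hsign with hpos | hneg
  · exact aux_pos φ hcont hint hpos g hg
  · intro y
    have hg' : ∀ z, (fun u => -g u) z
        = (1/2) * ∫ y' : ℝ, Real.exp (-|z - y'|) * (-φ) y' := by
      intro z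
      show -g z = _
      rw [hg z]
      have : (∫ y' : ℝ, Real.exp (-|z - y'|) * (-φ) y')
          = -∫ y' : ℝ, Real.exp (-|z - y'|) * φ y' := by
        rw [← integral_neg]; congr 1; funext x; simp [mul_neg]
      rw [this]; ring
    have := aux_pos (-φ) hcont.neg hint.neg (fun z => by simpa using hneg z)
      (fun u => -g u) hg' y
    rwa [deriv.fun_neg, abs_neg, abs_neg] at this
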